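/- The number of restricted growth strings of the paper's type of length k-1 (i.e., k-germs: strings a_{k-1}...a_1 with a_{k-1} ∈ {0,1} and 0 ≤ a_{i-1} ≤ a_i + 1 for 1 < i < k) equals the k-th Catalan number C_k = (2k)!/(k!(k+1)!). -/

import Mathlib

/-- A `k`-germ: a string `a_{k-1} a_{k-2} ... a_1` (listed left to right) of
length `k-1` with `a_{k-1} ∈ {0,1}` and `a_{i-1} ≤ a_i + 1` for `1 < i < k`. -/
def IsKGerm (k : ℕ) (l : List ℕ) : Prop :=
  l.length = k - 1 ∧ (∀ h : l ≠ [], l.head h ≤ 1) ∧ l.Chain' (fun x y => y ≤ x + 1)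

namespace KGermAux


/-- counting function -/
def F : ℕ → ℕ → ℕ
  | 0, _ => 1
  | n+1, a => ∑ b ∈ Finset.range (a+2), F n b

lemma F_succ_succ (n a : ℕ) : F (n+1) (a+1) = F (n+1) a + F n (a+2) := by
  simp [F, Finset.sum_range_succ]

lemma key : ∀ n a : ℕ, (n+a+2) * F n a = (a+2) * Nat.choose (2*n+a+1) n := by
  intro n
  induction n with
  | zero => intro a; simp [F]
  | succ n ih =>
    intro a
    induction a with
    | zero =>
      have h0 := ih 0
      have h1 := ih 1
      have rv : Nat.choose (2*n+2) (n+1) * (n+1) = Nat.choose (2*n+2) n * (n+2) := by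
        have h := Nat.choose_succ_right_eq (2*n+2) n
        rwa [show 2*n+2-n = n+2 by omega] at h
      have hv : Nat.choose (2*n+2) (n+1) = 2 * Nat.choose (2*n+1) n := by
        rw [show 2*n+2 = (2*n+1)+1 from rfl, Nat.choose_succ_succ']
        have : Nat.choose (2*n+1) (n+1) = Nat.choose (2*n+1) n := by
          rw [← Nat.choose_symm (by omega : n+1 ≤ 2*n+1)]
          congr 1; omega
        omega
      have r2 : Nat.choose (2*(n+1)+0+1) (n+1)
          = Nat.choose (2*n+2) n + Nat.choose (2*n+2) (n+1) := by
        rw [show 2*(n+1)+0+1 = (2*n+2)+1 from rfl, Nat.choose_succ_succ']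
      have hF : F (n+1) 0 = F n 0 + F n 1 := by
        simp [F, Finset.sum_range_succ]
      have hmul : (n+2) * ((n+1+0+2) * F (n+1) 0)
          = (n+2) * ((0+2) * Nat.choose (2*(n+1)+0+1) (n+1)) := by
        rw [hF, r2]
        zify at h0 h1 rv hv ⊢
        linear_combination ((n:ℤ)+3)*h0 + ((n:ℤ)+2)*h1 - rv - ((n:ℤ)+3)*hv
      exact Nat.eq_of_mul_eq_mul_left (by omega) hmul
    | succ a iha =>
      have hA := iha
      have hB := ih (a+2)
      have r1 : Nat.choose (2*n+a+3) (n+1) * (n+1)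
          = Nat.choose (2*n+a+3) n * (n+a+3) := by
        have h := Nat.choose_succ_right_eq (2*n+a+3) n
        rwa [show 2*n+a+3-n = n+a+3 by omega] at h
      have r2 : Nat.choose (2*(n+1)+(a+1)+1) (n+1)
          = Nat.choose (2*n+a+3) n + Nat.choose (2*n+a+3) (n+1) := by
        rw [show 2*(n+1)+(a+1)+1 = (2*n+a+3)+1 by ring, Nat.choose_succ_succ']
      have hF := F_succ_succ n a
      have hmul : ((n+1)*(n+a+3)) * ((n+1+(a+1)+2) * F (n+1) (a+1))
          = ((n+1)*(n+a+3)) * (((a+1)+2) * Nat.choose (2*(n+1)+(a+1)+1) (n+1)) := by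
        rw [hF, r2]
        have hA' : (n+1+a+2) * F (n+1) a = (a+2) * Nat.choose (2*(n+1)+a+1) (n+1) := hA
        rw [show 2*(n+1)+a+1 = 2*n+a+3 by ring] at hA'
        rw [show 2*n+(a+2)+1 = 2*n+a+3 by ring] at hB
        zify at hA' hB r1 ⊢
        linear_combination ((n:ℤ)+1)*((n:ℤ)+(a:ℤ)+4)*hA' + ((n:ℤ)+1)*((n:ℤ)+(a:ℤ)+3)*hB - ((n:ℤ)+1)*r1
      exact Nat.eq_of_mul_eq_mul_left (by positivity) hmul

lemma F_zero (n : ℕ) : F n 0 = catalan (n+1) := by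
  have h := key n 0
  have hc := succ_mul_catalan_eq_centralBinom (n+1)
  have hcb : Nat.centralBinom (n+1) = 2 * Nat.choose (2*n+1) n := by
    rw [Nat.centralBinom, show 2*(n+1) = (2*n+1)+1 by ring, Nat.choose_succ_succ']
    have : Nat.choose (2*n+1) (n+1) = Nat.choose (2*n+1) n := by
      rw [← Nat.choose_symm (by omega : n+1 ≤ 2*n+1)]
      congr 1; omega
    omega
  refine Nat.eq_of_mul_eq_mul_left (show 0 < n+2 by omega) ?_
  rw [show n+2 = n+0+2 from rfl, h, show n+0+2 = n+1+1 by ring, hc, hcb]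



def R : ℕ → ℕ → Prop := fun x y => y ≤ x + 1

def G : ℕ → ℕ → Finset (List ℕ)
  | 0, _ => {[]}
  | n+1, a => (Finset.range (a+2)).biUnion (fun b => (G n b).image (b :: ·))

lemma mem_G : ∀ (n a : ℕ) (l : List ℕ),
    l ∈ G n a ↔ l.length = n ∧ List.Chain (fun x y => y ≤ x+1) a l := by
  intro n
  induction n with
  | zero =>
    intro a l
    simp only [G, Finset.mem_singleton]
    constructor
    · rintro rfl; simp; exact List.Chain.nil
    · rintro ⟨h, -⟩; exact List.length_eq_zero_iff.mp h
  | succ n ih =>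
    intro a l
    simp only [G, Finset.mem_biUnion, Finset.mem_image, Finset.mem_range]
    constructor
    · rintro ⟨b, hb, t, ht, rfl⟩
      obtain ⟨hlen, hch⟩ := (ih b t).mp ht
      exact ⟨by simp [hlen], List.Chain.cons (by omega) hch⟩
    · rintro ⟨hlen, hch⟩
      cases l with
      | nil => simp at hlen
      | cons b t =>
        obtain ⟨hb, hch⟩ := List.isChain_cons_cons.mp hch
        exact ⟨b, by omega, t, (ih b t).mpr ⟨by simpa using hlen, hch⟩, rfl⟩

lemma card_G : ∀ n a : ℕ, (G n a).card = F n a := by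
  intro n
  induction n with
  | zero => intro a; simp [G, F]
  | succ n ih =>
    intro a
    rw [G, Finset.card_biUnion, F]
    · refine Finset.sum_congr rfl fun b _ => ?_
      rw [Finset.card_image_of_injective _ (fun x y h => by simpa using h), ih]
    · intro x _ y _ hxy
      simp only [Finset.disjoint_left, Finset.mem_image]
      rintro l ⟨t, -, rfl⟩ ⟨t', -, h⟩
      exact hxy (by simpa using (List.cons.injEq .. ▸ h).1.symm ▸ rfl)

lemma set_eq (k : ℕ) (hk : 1 ≤ k) : {l : List ℕ | IsKGerm k l} = ↑(G (k-1) 0) := by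
  ext l
  simp only [Set.mem_setOf_eq, Finset.coe_sort_coe, Finset.mem_coe, mem_G, IsKGerm]
  constructor
  · rintro ⟨hlen, hhead, hch⟩
    refine ⟨hlen, ?_⟩
    cases l with
    | nil => exact List.Chain.nil
    | cons b t =>
      exact List.Chain.cons (by simpa using hhead (by simp)) hch
  · rintro ⟨hlen, hch⟩
    cases l with
    | nil => exact ⟨hlen, by simp, List.isChain_nil⟩
    | cons b t =>
      obtain ⟨hb, hch⟩ := List.isChain_cons_cons.mp hch
      exact ⟨hlen, by simpa using hb, hch⟩

theorem numKGerms_eq_catalan (k : ℕ) (hk : 1 ≤ k) :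
    {l : List ℕ | IsKGerm k l}.ncard =
      (2 * k).factorial / (k.factorial * (k + 1).factorial) := by
  rw [set_eq k hk, Set.ncard_coe_finset, card_G, F_zero,
    show k - 1 + 1 = k by omega]
  have hfac : (2 * k).factorial = catalan k * (k.factorial * (k + 1).factorial) := by
    have h1 := succ_mul_catalan_eq_centralBinom k
    have h2 := Nat.choose_mul_factorial_mul_factorial (show k ≤ 2 * k by omega)
    rw [show 2*k - k = k by omega] at h2
    calc (2*k).factorial = (2*k).choose k * k.factorial * k.factorial := h2.symm
      _ = ((k+1) * catalan k) * k.factorial * k.factorial := by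
          rw [h1, Nat.centralBinom]
      _ = catalan k * (k.factorial * (k + 1).factorial) := by
          rw [Nat.factorial_succ]; ring
  rw [hfac, Nat.mul_div_cancel _ (by positivity)]

end KGermAux

theorem numKGerms_eq_catalan (k : ℕ) (hk : 1 ≤ k) :
    {l : List ℕ | IsKGerm k l}.ncard =
      (2 * k).factorial / (k.factorial * (k + 1).factorial) :=
  KGermAux.numKGerms_eq_catalan k hk
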